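/- Suppose the Fréchet derivative f' is uniformly continuous on C and the stepsizes (γ_k) are chosen by line minimization for the composite objective φ = f + g, i.e., φ(x_k + γ_k(x̄_k − x_k)) ≤ φ(x_k + γ(x̄_k − x_k)) for all γ ∈ [0,1]. Then the sequence (x_k) generated by the generalized Frank–Wolfe algorithm satisfies: (i) φ(x_{k+1}) ≤ φ(x_k) for all k ≥ 0, and (ii) φ(x_k) → φ* := inf_{x ∈ C} φ(x) as k → ∞. -/

import Mathlib

open Filter Topology Set

lemma grad_ineq {X : Type*} [NormedAddCommGroup X] [NormedSpace ℝ X]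
    {f : X → ℝ} {f' : X → X →L[ℝ] ℝ}
    (hfconv : ConvexOn ℝ Set.univ f)
    (hfderiv : ∀ x : X, HasFDerivAt f (f' x) x)
    (x y : X) : f x + f' x (y - x) ≤ f y := by
  set v := y - x with hv
  have h1 : HasDerivAt (fun t : ℝ => x + t • v) v 0 := by
    simpa using ((hasDerivAt_id (0:ℝ)).smul_const v).const_add x
  have hd : HasDerivAt (fun t : ℝ => f (x + t • v)) (f' x v) 0 := by
    have h := (hfderiv (x + (0:ℝ) • v)).comp_hasDerivAt 0 h1
    rw [zero_smul, add_zero] at h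
    exact h
  have hslope := hasDerivAt_iff_tendsto_slope.mp hd
  have hsl : Tendsto (slope (fun t : ℝ => f (x + t • v)) 0) (𝓝[>] (0:ℝ)) (𝓝 (f' x v)) :=
    hslope.mono_left (nhdsWithin_mono _ fun t ht => ne_of_gt ht)
  have key : f' x v ≤ f y - f x := by
    refine le_of_tendsto hsl ?_
    filter_upwards [Ioo_mem_nhdsGT_of_mem (Set.mem_Ico.mpr ⟨le_refl (0:ℝ), one_pos⟩)] with t ht
    have ht0 : (0:ℝ) < t := ht.1
    have ht1 : t < 1 := ht.2
    have hpt : x + t • v = t • y + (1 - t) • x := by rw [hv]; module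
    have hcv := hfconv.2 (Set.mem_univ y) (Set.mem_univ x) (le_of_lt ht0)
      (by linarith : (0:ℝ) ≤ 1 - t) (by ring)
    have hfb : f (x + t • v) ≤ t * f y + (1 - t) * f x := by
      rw [hpt]; simpa [smul_eq_mul] using hcv
    have hse : slope (fun t : ℝ => f (x + t • v)) 0 t = (f (x + t • v) - f x) / t := by
      simp [slope_def_field]
    rw [hse, div_le_iff₀ ht0]
    nlinarith
  linarith

/-- **Convergence of the generalized Frank–Wolfe algorithm with line minimization**
(Theorem 5.1). For the composite objective `φ = f + g`, with `f'` uniformly continuous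
on `C`, `g` proper lsc convex and finite on `C`, and stepsizes chosen by line
minimization for `φ`, the generalized Frank–Wolfe iterates satisfy
`φ(x_{k+1}) ≤ φ(x_k)` and `φ(x_k) → φ* = inf_C φ`. -/
theorem stmt_15
    {X : Type*} [NormedAddCommGroup X] [NormedSpace ℝ X] [CompleteSpace X]
    (C : Set X) (hCne : C.Nonempty) (hCcl : IsClosed C)
    (hCbd : Bornology.IsBounded C) (hCcv : Convex ℝ C)
    (f : X → ℝ) (f' : X → X →L[ℝ] ℝ)
    (hfconv : ConvexOn ℝ Set.univ f)
    (hfderiv : ∀ x : X, HasFDerivAt f (f' x) x)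
    (hfUC : UniformContinuousOn f' C)
    (g : X → EReal)
    (hgproper : ∃ z : X, g z ≠ ⊤) (hgnebot : ∀ z : X, g z ≠ ⊥)
    (hglsc : LowerSemicontinuous g)
    (hgconv : ∀ z w : X, ∀ lam : ℝ, 0 < lam → lam < 1 →
      g (lam • z + (1 - lam) • w) ≤ (lam : EReal) * g z + ((1 - lam : ℝ) : EReal) * g w)
    (hgC : ∀ z ∈ C, g z ≠ ⊤)
    (xstar : X) (hxstarC : xstar ∈ C)
    (hxstarmin : ∀ y ∈ C, (f xstar : EReal) + g xstar ≤ (f y : EReal) + g y)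
    (x xbar : ℕ → X) (γ : ℕ → ℝ)
    (hx0 : x 0 ∈ C)
    (hxbarC : ∀ k, xbar k ∈ C)
    (hxbarmin : ∀ k, ∀ y ∈ C,
      (f' (x k) (xbar k) : EReal) + g (xbar k) ≤ (f' (x k) y : EReal) + g y)
    (hγ : ∀ k, γ k ∈ Set.Icc (0 : ℝ) 1)
    (hupdate : ∀ k, x (k + 1) = x k + γ k • (xbar k - x k))
    (hlinemin : ∀ k, ∀ γ' ∈ Set.Icc (0 : ℝ) 1,
      (f (x k + γ k • (xbar k - x k)) : EReal) + g (x k + γ k • (xbar k - x k)) ≤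
        (f (x k + γ' • (xbar k - x k)) : EReal) + g (x k + γ' • (xbar k - x k))) :
    (∀ k, (f (x (k + 1)) : EReal) + g (x (k + 1)) ≤ (f (x k) : EReal) + g (x k)) ∧
      Tendsto (fun k => (f (x k) : EReal) + g (x k)) atTop
        (𝓝 ((f xstar : EReal) + g xstar)) := by
  classical
  -- all iterates and segment points lie in C
  have hxC : ∀ k, x k ∈ C := by
    intro k
    induction k with
    | zero => exact hx0
    | succ n ih =>
      rw [hupdate n]
      have h := hCcv ih (hxbarC n)
        (by linarith [(hγ n).2] : (0:ℝ) ≤ 1 - γ n) (hγ n).1 (by ring)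
      convert h using 1
      module
  have hseg : ∀ k, ∀ t ∈ Set.Icc (0:ℝ) 1, x k + t • (xbar k - x k) ∈ C := by
    intro k t ht
    have h := hCcv (hxC k) (hxbarC k)
      (by linarith [ht.2] : (0:ℝ) ≤ 1 - t) ht.1 (by ring)
    convert h using 1
    module
  -- real-valued g on C
  set gV : X → ℝ := fun z => (g z).toReal with hgVdef
  have hgV : ∀ z ∈ C, g z = ((gV z : ℝ) : EReal) := fun z hz =>
    (EReal.coe_toReal (hgC z hz) (hgnebot z)).symm
  have hcoe : ∀ z ∈ C, (f z : EReal) + g z = ((f z + gV z : ℝ) : EReal) := by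
    intro z hz; rw [hgV z hz, ← EReal.coe_add]
  set φR : ℕ → ℝ := fun k => f (x k) + gV (x k) with hφRdef
  have hφR : ∀ k, (f (x k) : EReal) + g (x k) = ((φR k : ℝ) : EReal) := fun k =>
    hcoe (x k) (hxC k)
  set A : ℝ := f xstar + gV xstar with hAdef
  -- real versions of hypotheses
  have hAmin : ∀ y ∈ C, A ≤ f y + gV y := by
    intro y hy
    have := hxstarmin y hy
    rw [hcoe xstar hxstarC, hcoe y hy] at this
    exact_mod_cast this
  have hbarmin : ∀ k, ∀ y ∈ C, f' (x k) (xbar k) + gV (xbar k) ≤ f' (x k) y + gV y := by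
    intro k y hy
    have := hxbarmin k y hy
    rw [hgV _ (hxbarC k), hgV y hy, ← EReal.coe_add, ← EReal.coe_add] at this
    exact_mod_cast this
  have hlm : ∀ k, ∀ t ∈ Set.Icc (0:ℝ) 1,
      φR (k+1) ≤ f (x k + t • (xbar k - x k)) + gV (x k + t • (xbar k - x k)) := by
    intro k t ht
    have h := hlinemin k t ht
    rw [hcoe _ (hseg k (γ k) (hγ k)), hcoe _ (hseg k t ht)] at h
    have h' : f (x k + γ k • (xbar k - x k)) + gV (x k + γ k • (xbar k - x k)) ≤
        f (x k + t • (xbar k - x k)) + gV (x k + t • (xbar k - x k)) := by exact_mod_cast h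
    calc φR (k+1) = f (x k + γ k • (xbar k - x k)) + gV (x k + γ k • (xbar k - x k)) := by
          rw [hφRdef]; simp only [hupdate k]
      _ ≤ _ := h'
  -- real convexity of g on C
  have hgcv : ∀ k, ∀ t ∈ Set.Icc (0:ℝ) 1,
      gV (x k + t • (xbar k - x k)) ≤ (1 - t) * gV (x k) + t * gV (xbar k) := by
    intro k t ht
    rcases eq_or_lt_of_le ht.1 with h0 | h0
    · have : x k + t • (xbar k - x k) = x k := by rw [← h0]; simp
      rw [this, ← h0]; ring_nf; exact le_refl _
    rcases eq_or_lt_of_le ht.2 with h1 | h1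
    · have : x k + t • (xbar k - x k) = xbar k := by rw [h1]; module
      rw [this, h1]; ring_nf; exact le_refl _
    have hp : x k + t • (xbar k - x k) = t • xbar k + (1 - t) • x k := by module
    have h := hgconv (xbar k) (x k) t h0 h1
    rw [← hp] at h
    rw [hgV _ (hxbarC k), hgV _ (hxC k), hgV _ (hseg k t ht)] at h
    rw [← EReal.coe_mul, ← EReal.coe_mul, ← EReal.coe_add] at h
    have h' : gV (x k + t • (xbar k - x k)) ≤ t * gV (xbar k) + (1 - t) * gV (x k) := by
      exact_mod_cast h
    linarith
  have hφReq : ∀ k, φR k = f (x k) + gV (x k) := fun _ => rfl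
  clear_value gV
  clear_value φR A
  -- diameter bound
  obtain ⟨R, hR⟩ := hCbd.exists_norm_le
  set D : ℝ := 2 * R + 1 with hDdef
  have hR0 : 0 ≤ R := le_trans (norm_nonneg _) (hR _ hx0)
  have hD0 : 0 < D := by positivity
  have hDbd : ∀ u ∈ C, ∀ v ∈ C, ‖u - v‖ ≤ D := by
    intro u hu v hv
    calc ‖u - v‖ ≤ ‖u‖ + ‖v‖ := norm_sub_le _ _
      _ ≤ R + R := add_le_add (hR u hu) (hR v hv)
      _ ≤ D := by rw [hDdef]; linarith
  clear_value D
  -- descent inequality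
  have hdesc : ∀ k, ∀ t ∈ Set.Icc (0:ℝ) 1,
      φR (k+1) ≤ φR k + t * (f' (x k) (xbar k) - f' (x k) (x k) + gV (xbar k) - gV (x k))
        + t * (‖f' (x k + t • (xbar k - x k)) - f' (x k)‖ * D) := by
    intro k t ht
    set d : X := xbar k - x k with hddef
    set p : X := x k + t • d with hpdef
    have hpC : p ∈ C := hseg k t ht
    have hgrad : f p + f' p (x k - p) ≤ f (x k) := by
      simpa using grad_ineq hfconv hfderiv p (x k)
    have hxp : x k - p = -(t • d) := by rw [hpdef]; module
    have hfp1 : f' p (x k - p) = -(t * f' p d) := by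
      rw [hxp]; simp [map_smul]
    have hfp : f p ≤ f (x k) + t * f' p d := by
      rw [hfp1] at hgrad; linarith
    have hnorm : f' p d - f' (x k) d ≤ ‖f' p - f' (x k)‖ * D := by
      have h1 : (f' p - f' (x k)) d ≤ ‖(f' p - f' (x k)) d‖ := le_abs_self _
      have h2 : ‖(f' p - f' (x k)) d‖ ≤ ‖f' p - f' (x k)‖ * ‖d‖ :=
        ContinuousLinearMap.le_opNorm _ _
      have h3 : ‖d‖ ≤ D := hDbd _ (hxbarC k) _ (hxC k)
      have h4 : ‖f' p - f' (x k)‖ * ‖d‖ ≤ ‖f' p - f' (x k)‖ * D :=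
        mul_le_mul_of_nonneg_left h3 (norm_nonneg _)
      have h5 : (f' p - f' (x k)) d = f' p d - f' (x k) d := by simp
      linarith [h5 ▸ h1]
    have hfd : f' (x k) d = f' (x k) (xbar k) - f' (x k) (x k) := by
      rw [hddef]; simp
    have hgcv' := hgcv k t ht
    have hlm' := hlm k t ht
    have ht0 := ht.1
    have hmul : t * f' p d ≤ t * (f' (x k) d + ‖f' p - f' (x k)‖ * D) :=
      mul_le_mul_of_nonneg_left (by linarith) ht0
    rw [← hpdef] at hlm' hgcv'
    have hcomb : φR (k+1) ≤ f (x k) + t * f' p d + ((1 - t) * gV (x k) + t * gV (xbar k)) := by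
      calc φR (k+1) ≤ f p + gV p := hlm'
        _ ≤ _ := by linarith
    rw [hfd] at hmul
    rw [hφReq k]
    nlinarith
  -- gap lower bound
  have hGap : ∀ k, φR k - A ≤
      f' (x k) (x k) - f' (x k) (xbar k) + gV (x k) - gV (xbar k) := by
    intro k
    have h1 := hbarmin k xstar hxstarC
    have h2 : f (x k) + f' (x k) (xstar - x k) ≤ f xstar :=
      grad_ineq hfconv hfderiv (x k) xstar
    have h3 : f' (x k) (xstar - x k) = f' (x k) xstar - f' (x k) (x k) := by simp
    rw [h3] at h2
    rw [hAdef, hφRdef]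
    simp only
    linarith
  -- monotonicity (EReal form)
  have hmonoR : ∀ k, φR (k+1) ≤ φR k := by
    intro k
    have := hlm k 0 ⟨le_refl _, zero_le_one⟩
    simpa [hφRdef] using this
  have hmono : ∀ k, (f (x (k+1)) : EReal) + g (x (k+1)) ≤ (f (x k) : EReal) + g (x k) := by
    intro k
    rw [hφR k, hφR (k+1)]
    exact_mod_cast hmonoR k
  refine ⟨hmono, ?_⟩
  -- convergence
  have hanti : Antitone φR := antitone_nat_of_succ_le hmonoR
  have hlb : ∀ k, A ≤ φR k := fun k => (hφReq k) ▸ hAmin _ (hxC k)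
  have hbdd : BddBelow (Set.range φR) := ⟨A, by rintro _ ⟨k, rfl⟩; exact hlb k⟩
  set L : ℝ := ⨅ k, φR k with hLdef
  have hLtend : Tendsto φR atTop (𝓝 L) := tendsto_atTop_ciInf hanti hbdd
  have hLle : ∀ k, L ≤ φR k := fun k => ciInf_le hbdd k
  have hAL : A ≤ L := le_ciInf hlb
  clear_value L
  have hLA : L = A := by
    by_contra hne
    have hALlt : A < L := lt_of_le_of_ne hAL (Ne.symm hne)
    set h : ℝ := L - A with hhdef
    have hh0 : 0 < h := by rw [hhdef]; linarith
    clear_value h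
    -- uniform continuity: choose ε, δ
    set ε : ℝ := h / (2 * D) with hεdef
    have hε0 : 0 < ε := by positivity
    clear_value ε
    obtain ⟨δ, hδ0, hδ⟩ := Metric.uniformContinuousOn_iff.mp hfUC ε hε0
    set t : ℝ := min 1 (δ / (2 * D)) with htdef
    have ht0 : 0 < t := lt_min one_pos (by positivity)
    have ht1 : t ≤ 1 := min_le_left _ _
    have htD : t * D < δ := by
      have h1 : t ≤ δ / (2 * D) := min_le_right _ _
      have h2 : t * D ≤ (δ / (2 * D)) * D := mul_le_mul_of_nonneg_right h1 (le_of_lt hD0)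
      have h3 : (δ / (2 * D)) * D = δ / 2 := by field_simp
      have h4 : t * D ≤ δ / 2 := by rw [← h3]; exact h2
      linarith
    have htIcc : t ∈ Set.Icc (0:ℝ) 1 := ⟨le_of_lt ht0, ht1⟩
    clear_value t
    -- per-step strict decrease
    have hstep : ∀ k, φR (k+1) ≤ φR k - t * h / 2 := by
      intro k
      set p : X := x k + t • (xbar k - x k) with hpdef
      have hpC : p ∈ C := hseg k t htIcc
      have hdist : dist p (x k) < δ := by
        rw [dist_eq_norm]
        have h1 : p - x k = t • (xbar k - x k) := by rw [hpdef]; module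
        rw [h1, norm_smul]
        have h2 : ‖xbar k - x k‖ ≤ D := hDbd _ (hxbarC k) _ (hxC k)
        have h3 : ‖t‖ = t := abs_of_pos ht0
        rw [h3]
        calc t * ‖xbar k - x k‖ ≤ t * D := mul_le_mul_of_nonneg_left h2 (le_of_lt ht0)
          _ < δ := htD
      have hN : ‖f' p - f' (x k)‖ < ε := by
        have := hδ p hpC (x k) (hxC k) hdist
        rwa [dist_eq_norm] at this
      have hGk : h ≤ f' (x k) (x k) - f' (x k) (xbar k) + gV (x k) - gV (xbar k) := by
        have := hGap k
        have := hLle k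
        linarith
      have hd := hdesc k t htIcc
      rw [← hpdef] at hd
      have hnd : t * (‖f' p - f' (x k)‖ * D) ≤ t * (ε * D) := by
        apply mul_le_mul_of_nonneg_left _ (le_of_lt ht0)
        exact mul_le_mul_of_nonneg_right (le_of_lt hN) (le_of_lt hD0)
      have hεD : ε * D = h / 2 := by rw [hεdef]; field_simp
      have hgap' : t * (f' (x k) (xbar k) - f' (x k) (x k) + gV (xbar k) - gV (x k)) ≤
          t * (-h) := mul_le_mul_of_nonneg_left (by linarith) (le_of_lt ht0)
      rw [hεD] at hnd
      calc φR (k+1) ≤ φR k + t * (f' (x k) (xbar k) - f' (x k) (x k) + gV (xbar k) - gV (x k))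
            + t * (‖f' p - f' (x k)‖ * D) := hd
        _ ≤ φR k + t * (-h) + t * (h / 2) := by linarith
        _ = φR k - t * h / 2 := by ring
    -- iterate to contradiction
    have hiter : ∀ k : ℕ, φR k ≤ φR 0 - k * (t * h / 2) := by
      intro k
      induction k with
      | zero => simp
      | succ n ih =>
        have := hstep n
        push_cast
        push_cast at ih
        linarith
    obtain ⟨k, hk⟩ := exists_nat_gt ((φR 0 - A) / (t * h / 2))
    have hth : 0 < t * h / 2 := by positivity
    have h1 : (φR 0 - A) < k * (t * h / 2) := by
      rw [div_lt_iff₀ hth] at hk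
      linarith
    have := hlb k
    have := hiter k
    linarith
  -- assemble tendsto
  have hTR : Tendsto φR atTop (𝓝 A) := hLA ▸ hLtend
  have hT : Tendsto (fun k => ((φR k : ℝ) : EReal)) atTop (𝓝 ((A : ℝ) : EReal)) :=
    EReal.tendsto_coe.mpr hTR
  have hgoal : ((A : ℝ) : EReal) = (f xstar : EReal) + g xstar := by
    rw [hAdef]; exact (hcoe xstar hxstarC).symm
  rw [← hgoal]
  exact hT.congr fun k => (hφR k).symm
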